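/- Let g:[0,l]→ℂ satisfy |g'|≡1 with g' having modulus of continuity ω, and extend K(s,t) = Re[conj(g(t)−g(s)) · i g'(s)] periodically by K(s±l, t±l)=K(s,t) (assuming g(s+l)=g(s) when extended). Then |K(s,t)| ≤ ∫₀^{min{|s−t|, l−|s−t|}} ω(τ) dτ for all s,t with |s−t| ≤ l. -/

import Mathlib

open Set Complex MeasureTheory intervalIntegral

lemma lemA (l : ℝ) (hl : 0 < l) (g : ℝ → ℂ) (g' : ℝ → ℂ) (ω : ℝ → ℝ)
    (hderiv : ∀ s, HasDerivAt g (g' s) s)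
    (hunit : ∀ s, ‖g' s‖ = 1)
    (hωmono : MonotoneOn ω (Icc 0 l))
    (hωnonneg : ∀ x ∈ Icc 0 l, 0 ≤ ω x)
    (hmod : ∀ s t : ℝ, |s - t| ≤ l → ‖g' s - g' t‖ ≤ ω |s - t|)
    (s t : ℝ) (h : |t - s| ≤ l) :
    |((starRingEnd ℂ) (g t - g s) * (Complex.I * g' s)).re|
      ≤ ∫ τ in (0:ℝ)..|t - s|, ω τ := by
  set c : ℂ := Complex.I * g' s with hc
  have hcnorm : ‖c‖ = 1 := by
    rw [hc, norm_mul, Complex.norm_I, one_mul, hunit]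
  set f : ℝ → ℝ := fun u => ((starRingEnd ℂ) (g' u) * c).re with hf
  -- measurability of g'
  have hg'eq : g' = deriv g := by
    funext u; exact ((hderiv u).deriv).symm
  have mg' : Measurable g' := hg'eq ▸ measurable_deriv g
  have mf : Measurable f := by
    apply Complex.measurable_re.comp
    exact ((Complex.continuous_conj.measurable.comp mg').mul_const c)
  have hfbound : ∀ u, |f u| ≤ 1 := by
    intro u
    calc |f u| ≤ ‖(starRingEnd ℂ) (g' u) * c‖ := Complex.abs_re_le_norm _
    _ = ‖g' u‖ * ‖c‖ := by rw [norm_mul, Complex.norm_conj]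
    _ = 1 := by rw [hunit, hcnorm, one_mul]
  have hfint : IntervalIntegrable f volume s t := by
    apply IntervalIntegrable.mono_fun (_root_.intervalIntegrable_const (c := (1:ℝ)))
      mf.aestronglyMeasurable
    exact Filter.Eventually.of_forall fun u => by
      simpa [Real.norm_eq_abs] using hfbound u
  -- FTC
  have hF : ∀ u, HasDerivAt (fun v => ((starRingEnd ℂ) (g v) * c).re)
      (f u) u := by
    intro u
    have h1 : HasDerivAt (fun v => (starRingEnd ℂ) (g v)) ((starRingEnd ℂ) (g' u)) u := by
      simp only [starRingEnd_apply]
      exact (hderiv u).star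
    have h2 := h1.mul_const c
    exact Complex.reCLM.hasFDerivAt.comp_hasDerivAt u h2
  have hFTC : (∫ u in s..t, f u)
      = ((starRingEnd ℂ) (g t - g s) * c).re := by
    rw [intervalIntegral.integral_eq_sub_of_hasDerivAt (fun u _ => hF u) hfint]
    rw [map_sub, sub_mul, Complex.sub_re]
  -- pointwise bound: |f u| ≤ ω |u - s|
  have hre0 : ∀ z : ℂ, ((starRingEnd ℂ) z * (Complex.I * z)).re = 0 := by
    intro z
    simp [Complex.mul_re, Complex.mul_im]
    ring
  have hptw : ∀ u, |u - s| ≤ l → |f u| ≤ ω |u - s| := by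
    intro u hu
    have : f u = ((starRingEnd ℂ) (g' u - g' s) * c).re := by
      rw [map_sub, sub_mul, Complex.sub_re, hc, hre0, sub_zero]
    rw [this]
    calc |((starRingEnd ℂ) (g' u - g' s) * c).re|
        ≤ ‖(starRingEnd ℂ) (g' u - g' s) * c‖ := Complex.abs_re_le_norm _
      _ = ‖g' u - g' s‖ * ‖c‖ := by rw [norm_mul, Complex.norm_conj]
      _ = ‖g' u - g' s‖ := by rw [hcnorm, mul_one]
      _ ≤ ω |u - s| := hmod u s hu
  rcases le_total s t with hst | hst
  · have hts : |t - s| = t - s := _root_.abs_of_nonneg (by linarith)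
    set B : ℝ → ℝ := fun u => ω (u - s) with hB
    have hBint : IntervalIntegrable B volume s t := by
      apply MonotoneOn.intervalIntegrable
      intro u hu v hv huv
      rw [uIcc_of_le hst] at hu hv
      exact hωmono ⟨by linarith [hu.1], by linarith [hv.2, hts ▸ h]⟩
        ⟨by linarith [hv.1], by linarith [hv.2, hts ▸ h]⟩ (by linarith)
    have hbnd : ∀ᵐ u ∂(volume.restrict (Set.uIoc s t)), ‖f u‖ ≤ B u := by
      apply ae_restrict_of_forall_mem measurableSet_uIoc
      intro u hu
      rw [uIoc_of_le hst] at hu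
      have h1 : |u - s| ≤ l := by
        rw [_root_.abs_of_nonneg (by linarith [hu.1])]
        linarith [hu.2, hts ▸ h]
      have := hptw u h1
      rw [_root_.abs_of_nonneg (by linarith [hu.1] : (0:ℝ) ≤ u - s)] at this
      simpa [hB, Real.norm_eq_abs] using this
    have key := intervalIntegral.norm_integral_le_abs_of_norm_le hbnd hBint
    rw [hFTC] at key
    have hchg : (∫ u in s..t, B u) = ∫ τ in (0:ℝ)..(t - s), ω τ := by
      have h2 := intervalIntegral.integral_comp_sub_right (a := s) (b := t) ω s
      rw [sub_self] at h2
      exact h2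
    have hnn : (0:ℝ) ≤ ∫ τ in (0:ℝ)..(t - s), ω τ := by
      apply intervalIntegral.integral_nonneg (by linarith)
      intro τ hτ
      exact hωnonneg τ ⟨hτ.1, by linarith [hτ.2, hts ▸ h]⟩
    rw [hchg, _root_.abs_of_nonneg hnn] at key
    rw [hts]
    simpa [Real.norm_eq_abs] using key
  · have hts : |t - s| = s - t := by
      rw [abs_sub_comm]; exact _root_.abs_of_nonneg (by linarith)
    set B : ℝ → ℝ := fun u => ω (s - u) with hB
    have hBint : IntervalIntegrable B volume s t := by
      apply AntitoneOn.intervalIntegrable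
      intro u hu v hv huv
      rw [uIcc_of_ge hst] at hu hv
      exact hωmono ⟨by linarith [hv.2], by linarith [hu.1, hts ▸ h]⟩
        ⟨by linarith [hu.2], by linarith [hu.1, hts ▸ h]⟩ (by linarith)
    have hbnd : ∀ᵐ u ∂(volume.restrict (Set.uIoc s t)), ‖f u‖ ≤ B u := by
      apply ae_restrict_of_forall_mem measurableSet_uIoc
      intro u hu
      rw [uIoc_of_ge hst] at hu
      have h1 : |u - s| ≤ l := by
        rw [abs_sub_comm, _root_.abs_of_nonneg (by linarith [hu.2])]
        linarith [hu.1, hts ▸ h]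
      have := hptw u h1
      rw [abs_sub_comm, _root_.abs_of_nonneg (by linarith [hu.2] : (0:ℝ) ≤ s - u)] at this
      simpa [hB, Real.norm_eq_abs] using this
    have key := intervalIntegral.norm_integral_le_abs_of_norm_le hbnd hBint
    rw [hFTC] at key
    have hchg : (∫ u in s..t, B u) = - ∫ τ in (0:ℝ)..(s - t), ω τ := by
      have h2 := intervalIntegral.integral_comp_sub_left (a := s) (b := t) ω s
      rw [sub_self] at h2
      exact h2.trans (intervalIntegral.integral_symm 0 (s - t))
    have hnn : (0:ℝ) ≤ ∫ τ in (0:ℝ)..(s - t), ω τ := by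
      apply intervalIntegral.integral_nonneg (by linarith)
      intro τ hτ
      exact hωnonneg τ ⟨hτ.1, by linarith [hτ.2, hts ▸ h]⟩
    rw [hchg, abs_neg, _root_.abs_of_nonneg hnn] at key
    rw [hts]
    simpa [Real.norm_eq_abs] using key

theorem stmt_3 (l : ℝ) (hl : 0 < l) (g : ℝ → ℂ) (g' : ℝ → ℂ) (ω : ℝ → ℝ)
    (hper : ∀ s, g (s + l) = g s)
    (hderiv : ∀ s, HasDerivAt g (g' s) s)
    (hunit : ∀ s, ‖g' s‖ = 1)
    (hωmono : MonotoneOn ω (Icc 0 l))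
    (hωnonneg : ∀ x ∈ Icc 0 l, 0 ≤ ω x)
    (hmod : ∀ s t : ℝ, |s - t| ≤ l → ‖g' s - g' t‖ ≤ ω |s - t|) :
    ∀ s t : ℝ, |s - t| ≤ l →
      |((starRingEnd ℂ) (g t - g s) * (Complex.I * g' s)).re|
        ≤ ∫ τ in (0:ℝ)..(min |s - t| (l - |s - t|)), ω τ := by
  intro s t hst
  rcases le_total (|s - t|) (l - |s - t|) with hmin | hmin
  · rw [min_eq_left hmin, abs_sub_comm]
    exact lemA l hl g g' ω hderiv hunit hωmono hωnonneg hmod s t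
      (by rw [abs_sub_comm]; exact hst)
  · rw [min_eq_right hmin]
    rcases le_total s t with hle | hle
    · -- s ≤ t, use t' = t - l
      have hd : |s - t| = t - s := by
        rw [abs_sub_comm]; exact _root_.abs_of_nonneg (by linarith)
      have hgt : g t = g (t - l) := by
        have := hper (t - l); rw [sub_add_cancel] at this; exact this
      have habs : |(t - l) - s| = l - |s - t| := by
        rw [hd]
        rw [abs_sub_comm, _root_.abs_of_nonneg (by linarith [hd ▸ hst] : (0:ℝ) ≤ s - (t - l))]
        ring
      have h2 : |(t - l) - s| ≤ l := by rw [habs]; linarith [abs_nonneg (s - t)]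
      have := lemA l hl g g' ω hderiv hunit hωmono hωnonneg hmod s (t - l) h2
      rw [habs] at this
      rwa [hgt]
    · -- t ≤ s, use t' = t + l
      have hd : |s - t| = s - t := _root_.abs_of_nonneg (by linarith)
      have hgt : g t = g (t + l) := (hper t).symm
      have habs : |(t + l) - s| = l - |s - t| := by
        rw [hd, _root_.abs_of_nonneg (by linarith [hd ▸ hst] : (0:ℝ) ≤ (t + l) - s)]
        ring
      have h2 : |(t + l) - s| ≤ l := by rw [habs]; linarith [abs_nonneg (s - t)]
      have := lemA l hl g g' ω hderiv hunit hωmono hωnonneg hmod s (t + l) h2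
      rw [habs] at this
      rwa [hgt]
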